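/- Let n and C be natural numbers with n > 1 and C > 1, let F be a field, and let x, y ∈ GL_n(F) satisfy x⁻¹ y x = y^C. Then y^((C^n)!) is unipotent, i.e. y^((C^n)!) − 1 is a nilpotent matrix. -/

import Mathlib

open Polynomial in
/-- A scalar is in the spectrum of a matrix over a field iff it is a root of the
characteristic polynomial. -/
lemma aux_mem_spectrum_iff_isRoot_charpoly {K : Type*} [Field K] {m : Type*} [Fintype m]
    [DecidableEq m] (A : Matrix m m K) (μ : K) :
    μ ∈ spectrum K A ↔ A.charpoly.IsRoot μ := by
  have hdet : (algebraMap K (Matrix m m K) μ - A).det = A.charpoly.eval μ := by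
    rw [Matrix.charpoly, ← coe_evalRingHom, RingHom.map_det]
    congr 1
    ext i j
    by_cases hij : i = j <;>
      simp [hij, Matrix.charmatrix_apply, Matrix.algebraMap_matrix_apply, Matrix.diagonal]
  rw [spectrum.mem_iff, Matrix.isUnit_iff_isUnit_det, isUnit_iff_ne_zero, not_not, hdet,
    IsRoot.def]

open Polynomial in
/-- Over an algebraically closed field, a square matrix whose spectrum is contained in `{0}`
is nilpotent. -/
lemma aux_isNilpotent_of_spectrum_subset_zero {K : Type*} [Field K] [IsAlgClosed K]
    {m : Type*} [Fintype m] [DecidableEq m] [Nonempty m] (B : Matrix m m K)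
    (hB : spectrum K B ⊆ {0}) : IsNilpotent B := by
  have hmonic : B.charpoly.Monic := Matrix.charpoly_monic B
  have hsplits : B.charpoly.Splits := IsAlgClosed.splits _
  have hdeg : B.charpoly.natDegree = Fintype.card m := Matrix.charpoly_natDegree_eq_dim B
  have hroots : ∀ μ ∈ B.charpoly.roots, μ = 0 := by
    intro μ hμ
    have : μ ∈ spectrum K B := by
      rw [aux_mem_spectrum_iff_isRoot_charpoly]
      exact isRoot_of_mem_roots hμ
    exact hB this
  have hcard : Multiset.card B.charpoly.roots = B.charpoly.natDegree := by
    exact hsplits.natDegree_eq_card_roots.symm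
  have hrepl : B.charpoly.roots = Multiset.replicate (Fintype.card m) (0 : K) := by
    rw [Multiset.eq_replicate]
    exact ⟨by rw [hcard, hdeg], hroots⟩
  have hcp : B.charpoly = X ^ Fintype.card m := by
    have := hsplits.eq_prod_roots_of_monic hmonic
    rw [hrepl] at this
    simpa [Multiset.map_replicate, Multiset.prod_replicate] using this
  refine ⟨Fintype.card m, ?_⟩
  have := Matrix.aeval_self_charpoly B
  rw [hcp] at this
  simpa using this

/-- If `x, y ∈ GL_n(F)` satisfy `x⁻¹ y x = y ^ C` with `n, C > 1`, then
`y ^ (C ^ n)!` is unipotent, i.e. `y ^ (C ^ n)! - 1` is nilpotent. -/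
theorem gln_conj_pow_unipotent (n C : ℕ) (hn : 1 < n) (hC : 1 < C)
    (F : Type*) [Field F] (x y : GL (Fin n) F)
    (h : x⁻¹ * y * x = y ^ C) :
    IsNilpotent (((y ^ Nat.factorial (C ^ n) : GL (Fin n) F) : Matrix (Fin n) (Fin n) F) - 1) := by
  classical
  set N : ℕ := Nat.factorial (C ^ n) with hN
  have hNpos : 0 < N := Nat.factorial_pos _
  -- Pass to the algebraic closure
  let K := AlgebraicClosure F
  let f : F →+* K := algebraMap F K
  let φ : GL (Fin n) F →* GL (Fin n) K := Units.map f.mapMatrix.toMonoidHom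
  let Y : GL (Fin n) K := φ y
  let X : GL (Fin n) K := φ x
  have hK : X⁻¹ * Y * X = Y ^ C := by
    have := congrArg φ h
    simpa [X, Y, map_mul, map_pow] using this
  have conjpow : ∀ (g h : GL (Fin n) K) (k : ℕ), (g⁻¹ * h * g) ^ k = g⁻¹ * h ^ k * g := by
    intro g h k
    induction k with
    | zero => simp
    | succ k ih => rw [pow_succ, pow_succ, ih]; group
  -- iterated conjugation
  have hconj : ∀ m : ℕ, (X ^ m)⁻¹ * Y * X ^ m = Y ^ C ^ m := by
    intro m
    induction m with
    | zero => simp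
    | succ m ih =>
      have : X ^ (m + 1) = X ^ m * X := by rw [pow_succ]
      rw [this, mul_inv_rev]
      calc X⁻¹ * (X ^ m)⁻¹ * Y * (X ^ m * X)
          = X⁻¹ * ((X ^ m)⁻¹ * Y * X ^ m) * X := by group
        _ = X⁻¹ * Y ^ C ^ m * X := by rw [ih]
        _ = (X⁻¹ * Y * X) ^ C ^ m := (conjpow X Y (C ^ m)).symm
        _ = (Y ^ C) ^ C ^ m := by rw [hK]
        _ = Y ^ C ^ (m + 1) := by rw [← pow_mul, pow_succ, mul_comm (C ^ m) C]
  -- spectrum of powers of Y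
  let A : Matrix (Fin n) (Fin n) K := (Y : Matrix (Fin n) (Fin n) K)
  have hspec_pow : ∀ m : ℕ, spectrum K (A ^ C ^ m) = spectrum K A := by
    intro m
    have h1 : A ^ C ^ m = ((X ^ m : GL (Fin n) K) : Matrix (Fin n) (Fin n) K)⁻¹ *
        A * ((X ^ m : GL (Fin n) K) : Matrix (Fin n) (Fin n) K) := by
      have := congrArg (Units.val : GL (Fin n) K → Matrix (Fin n) (Fin n) K) (hconj m)
      simpa [A, Units.val_pow_eq_pow_val, Units.val_mul] using this.symm
    rw [h1]
    have := spectrum.units_conjugate' (R := K) (a := A) (u := (X ^ m : GL (Fin n) K))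
    simpa using this
  -- every eigenvalue λ of A satisfies λ ^ N = 1
  have heig : ∀ lam ∈ spectrum K A, lam ^ N = 1 := by
    intro lam hlam
    have hlam0 : lam ≠ 0 := by
      intro h0
      rw [h0] at hlam
      exact (spectrum.zero_notMem K Y.isUnit) hlam
    -- all powers lam ^ C ^ m are roots of charpoly A
    have hmem : ∀ m : ℕ, lam ^ C ^ m ∈ A.charpoly.roots.toFinset := by
      intro m
      have h1 : lam ^ C ^ m ∈ spectrum K (A ^ C ^ m) :=
        spectrum.pow_image_subset A (C ^ m) ⟨lam, hlam, rfl⟩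
      rw [hspec_pow m, aux_mem_spectrum_iff_isRoot_charpoly] at h1
      exact Multiset.mem_toFinset.mpr
        (Polynomial.mem_roots'.mpr ⟨(Matrix.charpoly_monic A).ne_zero, h1⟩)
    -- pigeonhole
    have hcardroots : A.charpoly.roots.toFinset.card < (Finset.range (n + 1)).card := by
      calc A.charpoly.roots.toFinset.card ≤ Multiset.card A.charpoly.roots :=
            A.charpoly.roots.toFinset_card_le
        _ ≤ A.charpoly.natDegree := Polynomial.card_roots' _
        _ = n := by rw [Matrix.charpoly_natDegree_eq_dim, Fintype.card_fin]
        _ < (Finset.range (n + 1)).card := by simp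
    have key : ∀ a b : ℕ, a < b → b ≤ n → lam ^ C ^ a = lam ^ C ^ b → lam ^ N = 1 := by
      intro a b hlt hble heq
      have hpowlt : C ^ a < C ^ b := Nat.pow_lt_pow_right hC hlt
      have hsum : C ^ a + (C ^ b - C ^ a) = C ^ b := Nat.add_sub_cancel' hpowlt.le
      have h1 : lam ^ (C ^ b - C ^ a) = 1 := by
        have h2 : lam ^ C ^ a * lam ^ (C ^ b - C ^ a) = lam ^ C ^ a * 1 := by
          rw [← pow_add, hsum, mul_one, ← heq]
        exact mul_left_cancel₀ (pow_ne_zero _ hlam0) h2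
      have hdpos : 0 < C ^ b - C ^ a := Nat.sub_pos_of_lt hpowlt
      have hdle : C ^ b - C ^ a ≤ C ^ n := by
        have : C ^ b ≤ C ^ n := Nat.pow_le_pow_right (by omega) hble
        omega
      obtain ⟨k, hk⟩ : (C ^ b - C ^ a) ∣ N := Nat.dvd_factorial hdpos hdle
      rw [hk, pow_mul, h1, one_pow]
    obtain ⟨a, ha, b, hb, hab, heq⟩ :=
      Finset.exists_ne_map_eq_of_card_lt_of_maps_to hcardroots (fun m _ => hmem m)
    rw [Finset.mem_range] at ha hb
    rcases hab.lt_or_gt with hlt | hlt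
    · exact key a b hlt (by omega) heq
    · exact key b a hlt (by omega) heq.symm
  -- spectrum of A ^ N is {1}, so A ^ N - 1 is nilpotent over K
  have : Nonempty (Fin n) := ⟨⟨0, by omega⟩⟩
  have hBnil : IsNilpotent (A ^ N - 1) := by
    apply aux_isNilpotent_of_spectrum_subset_zero
    intro μ hμ
    have hmem : μ + 1 ∈ spectrum K (A ^ N) := by
      rw [spectrum.mem_iff] at hμ ⊢
      have : algebraMap K (Matrix (Fin n) (Fin n) K) (μ + 1) - A ^ N =
          algebraMap K (Matrix (Fin n) (Fin n) K) μ - (A ^ N - 1) := by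
        rw [map_add, map_one]; abel
      rwa [this]
    rw [spectrum.map_pow_of_pos A hNpos] at hmem
    obtain ⟨lam, hlam, hlameq⟩ := hmem
    have h2 : lam ^ N = μ + 1 := hlameq
    have h3 : μ + 1 = 1 := by rw [← h2, heig lam hlam]
    have h4 : μ = 0 := by linear_combination h3
    exact Set.mem_singleton_iff.mpr h4
  -- descend nilpotency to F
  obtain ⟨k, hk⟩ := hBnil
  refine ⟨k, ?_⟩
  have hmapB : f.mapMatrix (((y ^ N : GL (Fin n) F) : Matrix (Fin n) (Fin n) F) - 1) =
      A ^ N - 1 := by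
    rw [map_sub, map_one]
    congr 1
    have : ((y ^ N : GL (Fin n) F) : Matrix (Fin n) (Fin n) F) =
        ((y : Matrix (Fin n) (Fin n) F)) ^ N := Units.val_pow_eq_pow_val y N
    rw [this, map_pow]
    rfl
  have hmap0 : f.mapMatrix ((((y ^ N : GL (Fin n) F) : Matrix (Fin n) (Fin n) F) - 1) ^ k) = 0 := by
    rw [map_pow, hmapB, hk]
  ext i j
  have := congrFun (congrFun (congrArg (fun M => (M : Matrix (Fin n) (Fin n) K)) hmap0) i) j
  simp only [RingHom.mapMatrix_apply, Matrix.map_apply, Matrix.zero_apply] at this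
  exact f.injective (by simpa using this)
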